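/- Let A = ℂ(x) be the field of rational functions and D₀ = d/dx the ordinary derivative. Let ℂ(x)_T = {Σ_{i=1}^k γ_i/(x−α_i) : α_i ∈ ℂ distinct, γ_i ∈ ℂ}. Then ℂ(x) = im(D₀) ⊕ ℂ(x)_T as ℂ-vector spaces. -/

import Mathlib

open Polynomial RatFunc
noncomputable section
namespace RFD
variable (D : Derivation ℂ (RatFunc ℂ) (RatFunc ℂ))

def w (α : ℂ) : RatFunc ℂ := (RatFunc.X - RatFunc.C α)⁻¹

lemma Xsub_eq (α : ℂ) :
    RatFunc.X - RatFunc.C α = algebraMap ℂ[X] (RatFunc ℂ) (Polynomial.X - Polynomial.C α) := by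
  simp [RatFunc.algebraMap_X, RatFunc.algebraMap_C]

lemma Xsub_ne (α : ℂ) : RatFunc.X - RatFunc.C α ≠ 0 := by
  rw [Xsub_eq]; exact RatFunc.algebraMap_ne_zero (X_sub_C_ne_zero α)

lemma D_C (a : ℂ) : D (RatFunc.C a) = 0 := by
  rw [← RatFunc.algebraMap_eq_C]; exact Derivation.map_algebraMap D a


lemma D_algebraMap (hD : D RatFunc.X = 1) (p : ℂ[X]) :
    D (algebraMap ℂ[X] (RatFunc ℂ) p) = algebraMap ℂ[X] (RatFunc ℂ) (derivative p) := by
  induction p using Polynomial.induction_on with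
  | C a => simp [RatFunc.algebraMap_C, D_C]
  | add p q hp hq => simp [hp, hq]
  | monomial n a ih =>
      simp only [map_mul, map_pow, RatFunc.algebraMap_C, RatFunc.algebraMap_X,
        derivative_C_mul, derivative_X_pow]
      rw [Derivation.leibniz, Derivation.leibniz_pow, hD, D_C]
      simp only [smul_eq_mul, RatFunc.smul_eq_C_mul, mul_one, smul_zero, add_zero, nsmul_eq_mul]
      rw [← map_natCast (RatFunc.C : ℂ →+* RatFunc ℂ) (n+1)]
      ring

lemma D_w (hD : D RatFunc.X = 1) (α : ℂ) : D (w α) = -(w α)^2 := by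
  rw [w, Derivation.leibniz_inv, map_sub, hD, D_C]
  simp [smul_eq_mul, w]

lemma D_w_pow (hD : D RatFunc.X = 1) (α : ℂ) (k : ℕ) :
    D ((w α)^(k+1)) = (-(k+1 : ℂ)) • (w α)^(k+2) := by
  rw [Derivation.leibniz_pow, D_w D hD]
  simp only [smul_eq_mul, Nat.add_sub_cancel, nsmul_eq_mul, RatFunc.smul_eq_C_mul, map_neg]
  rw [← map_natCast (RatFunc.C : ℂ →+* RatFunc ℂ) (k+1)]
  push_cast
  ring

def U : Submodule ℂ (RatFunc ℂ) :=
  LinearMap.range D.toLinearMap ⊔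
    Submodule.span ℂ {f : RatFunc ℂ | ∃ α : ℂ, f = (RatFunc.X - RatFunc.C α)⁻¹}

lemma range_le_U : LinearMap.range D.toLinearMap ≤ U D := le_sup_left

lemma D_mem_U (g : RatFunc ℂ) : D g ∈ U D := range_le_U D ⟨g, rfl⟩

lemma X_pow_mem (hD : D RatFunc.X = 1) (n : ℕ) : (RatFunc.X : RatFunc ℂ)^n ∈ U D := by
  refine range_le_U D ⟨((n+1 : ℂ))⁻¹ • RatFunc.X^(n+1), ?_⟩
  have h : (n+1 : ℂ) ≠ 0 := Nat.cast_add_one_ne_zero n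
  simp only [Derivation.coeFn_coe, map_smul, Derivation.leibniz_pow, hD,
    Nat.add_sub_cancel, smul_eq_mul, mul_one]
  rw [RatFunc.smul_eq_C_mul, nsmul_eq_mul, ← map_natCast (RatFunc.C : ℂ →+* RatFunc ℂ) (n+1),
    ← mul_assoc, ← map_mul]
  push_cast
  rw [inv_mul_cancel₀ h]
  simp

lemma w_pow_mem (hD : D RatFunc.X = 1) (α : ℂ) (k : ℕ) : (w α)^k ∈ U D := by
  match k with
  | 0 => simpa using X_pow_mem D hD 0
  | 1 => exact Submodule.mem_sup_right (Submodule.subset_span ⟨α, by simp [w]⟩)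
  | (k+2) =>
      refine range_le_U D ⟨(-(k+1 : ℂ))⁻¹ • (w α)^(k+1), ?_⟩
      have h : (-(k+1 : ℂ)) ≠ 0 := neg_ne_zero.mpr (Nat.cast_add_one_ne_zero k)
      simp only [Derivation.coeFn_coe, map_smul, D_w_pow D hD, smul_smul, inv_mul_cancel₀ h,
        one_smul]

lemma poly_mem (hD : D RatFunc.X = 1) (p : ℂ[X]) : algebraMap ℂ[X] (RatFunc ℂ) p ∈ U D := by
  induction p using Polynomial.induction_on with
  | C a =>
      rw [RatFunc.algebraMap_C, ← RatFunc.algebraMap_eq_C, Algebra.algebraMap_eq_smul_one]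
      exact Submodule.smul_mem _ _ (by simpa using X_pow_mem D hD 0)
  | add p q hp hq => rw [map_add]; exact add_mem hp hq
  | monomial n a ih =>
      rw [map_mul, map_pow, RatFunc.algebraMap_C, RatFunc.algebraMap_X, ← RatFunc.smul_eq_C_mul]
      exact Submodule.smul_mem _ _ (X_pow_mem D hD (n+1))

lemma w_eq (α : ℂ) : w α = (algebraMap ℂ[X] (RatFunc ℂ) (Polynomial.X - Polynomial.C α))⁻¹ := by
  rw [w, Xsub_eq]

lemma poly_mul_w_pow_mem (hD : D RatFunc.X = 1) (α : ℂ) :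
    ∀ (m : ℕ) (p : ℂ[X]), algebraMap ℂ[X] (RatFunc ℂ) p * (w α)^m ∈ U D := by
  intro m
  induction m with
  | zero => intro p; simpa using poly_mem D hD p
  | succ m ih =>
      intro p
      have hkey : algebraMap ℂ[X] (RatFunc ℂ) p * (w α)^(m+1) =
          algebraMap ℂ[X] (RatFunc ℂ) (p /ₘ (Polynomial.X - Polynomial.C α)) * (w α)^m
            + (p.eval α) • (w α)^(m+1) := by
        have hA : (algebraMap ℂ[X] (RatFunc ℂ)) (Polynomial.X - Polynomial.C α) * (w α)^(m+1)
            = (w α)^m := by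
          rw [w_eq, pow_succ', ← mul_assoc,
            mul_inv_cancel₀ (RatFunc.algebraMap_ne_zero (X_sub_C_ne_zero α)), one_mul]
        conv_lhs => rw [← modByMonic_add_div p (Polynomial.X - Polynomial.C α)]
        rw [modByMonic_X_sub_C_eq_C_eval, map_add, map_mul, RatFunc.algebraMap_C, add_mul,
          mul_comm ((algebraMap ℂ[X] (RatFunc ℂ)) (Polynomial.X - Polynomial.C α)), mul_assoc, hA,
          RatFunc.smul_eq_C_mul, add_comm]
      rw [hkey]
      exact add_mem (ih _) (Submodule.smul_mem _ _ (w_pow_mem D hD α (m+1)))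

lemma const_case (hD : D RatFunc.X = 1) (q : ℂ[X]) (hq : q ≠ 0) (hq0 : q.natDegree = 0)
    (p : ℂ[X]) : algebraMap ℂ[X] (RatFunc ℂ) p * (algebraMap ℂ[X] (RatFunc ℂ) q)⁻¹ ∈ U D := by
  obtain ⟨c, rfl⟩ : ∃ c, q = Polynomial.C c := ⟨q.coeff 0, (Polynomial.eq_C_of_natDegree_eq_zero hq0)⟩
  have hc : c ≠ 0 := by simpa using hq
  rw [RatFunc.algebraMap_C, ← map_inv₀, ← RatFunc.algebraMap_eq_C, mul_comm,
    ← Algebra.smul_def]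
  exact Submodule.smul_mem _ _ (poly_mem D hD p)

lemma div_mem (hD : D RatFunc.X = 1) :
    ∀ (n : ℕ) (q : ℂ[X]), q ≠ 0 → q.roots.toFinset.card ≤ n → ∀ p : ℂ[X],
      algebraMap ℂ[X] (RatFunc ℂ) p * (algebraMap ℂ[X] (RatFunc ℂ) q)⁻¹ ∈ U D := by
  intro n
  induction n with
  | zero =>
      intro q hq hcard p
      refine const_case D hD q hq ?_ p
      by_contra hdeg
      obtain ⟨z, hz⟩ := Complex.exists_root
        (Polynomial.natDegree_pos_iff_degree_pos.mp (Nat.pos_of_ne_zero hdeg))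
      have hzz : z ∈ q.roots.toFinset := Multiset.mem_toFinset.mpr
        (Polynomial.mem_roots'.mpr ⟨hq, hz⟩)
      rw [Nat.le_zero, Finset.card_eq_zero] at hcard
      simp [hcard] at hzz

  | succ n ih =>
      intro q hq hcard p
      by_cases hdeg : q.natDegree = 0
      · exact const_case D hD q hq hdeg p
      obtain ⟨α, hα⟩ := Complex.exists_root
        (Polynomial.natDegree_pos_iff_degree_pos.mp (Nat.pos_of_ne_zero hdeg))
      have hαr : α ∈ q.roots := Polynomial.mem_roots'.mpr ⟨hq, hα⟩
      set m := q.rootMultiplicity α with hm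
      set q₁ := q /ₘ (Polynomial.X - Polynomial.C α) ^ m with hq₁def
      have hfact : (Polynomial.X - Polynomial.C α) ^ m * q₁ = q :=
        q.pow_mul_divByMonic_rootMultiplicity_eq α
      have hq₁ : q₁ ≠ 0 := by
        intro h0
        rw [h0, mul_zero] at hfact
        exact hq hfact.symm
      have heval : q₁.eval α ≠ 0 := eval_divByMonic_pow_rootMultiplicity_ne_zero α hq
      have hcop : IsCoprime ((Polynomial.X - Polynomial.C α) ^ m) q₁ :=
        IsCoprime.pow_left (((irreducible_X_sub_C α).coprime_iff_not_dvd).mpr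
          (fun hdvd => heval (by
            have := (Polynomial.dvd_iff_isRoot).mp hdvd
            exact this)))
      obtain ⟨u, v, huv⟩ := hcop
      -- roots of q₁ are fewer
      have hsub : q₁.roots.toFinset ⊆ q.roots.toFinset.erase α := by
        intro x hx
        rw [Multiset.mem_toFinset] at hx
        refine Finset.mem_erase.mpr ⟨?_, Multiset.mem_toFinset.mpr ?_⟩
        · rintro rfl
          exact heval (Polynomial.mem_roots'.mp hx).2
        · rw [← hfact]
          rw [Polynomial.mem_roots'] at hx ⊢
          refine ⟨by rw [hfact]; exact hq, ?_⟩
          simp [Polynomial.IsRoot, hx.2.eq_zero]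
      have hcard₁ : q₁.roots.toFinset.card ≤ n := by
        have h1 : α ∈ q.roots.toFinset := Multiset.mem_toFinset.mpr hαr
        have := Finset.card_le_card hsub
        have h2 := Finset.card_erase_of_mem h1
        omega
      -- the decomposition
      have hQm : (algebraMap ℂ[X] (RatFunc ℂ)) ((Polynomial.X - Polynomial.C α) ^ m) ≠ 0 :=
        RatFunc.algebraMap_ne_zero (pow_ne_zero m (X_sub_C_ne_zero α))
      have hQ1 : (algebraMap ℂ[X] (RatFunc ℂ)) q₁ ≠ 0 := RatFunc.algebraMap_ne_zero hq₁
      have hwm : (w α) ^ m = ((algebraMap ℂ[X] (RatFunc ℂ)) ((Polynomial.X - Polynomial.C α) ^ m))⁻¹ := by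
        rw [w_eq, map_pow, inv_pow]
      have hsplit : algebraMap ℂ[X] (RatFunc ℂ) p * (algebraMap ℂ[X] (RatFunc ℂ) q)⁻¹
          = algebraMap ℂ[X] (RatFunc ℂ) (p * u) * (algebraMap ℂ[X] (RatFunc ℂ) q₁)⁻¹
            + algebraMap ℂ[X] (RatFunc ℂ) (p * v) * (w α) ^ m := by
        have huv' : (algebraMap ℂ[X] (RatFunc ℂ)) u * (algebraMap ℂ[X] (RatFunc ℂ)) ((Polynomial.X - Polynomial.C α) ^ m)
            + (algebraMap ℂ[X] (RatFunc ℂ)) v * (algebraMap ℂ[X] (RatFunc ℂ)) q₁ = 1 := by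
          rw [← map_mul, ← map_mul, ← map_add, huv, map_one]
        have h2 : (algebraMap ℂ[X] (RatFunc ℂ)) q
            = (algebraMap ℂ[X] (RatFunc ℂ)) ((Polynomial.X - Polynomial.C α) ^ m)
              * (algebraMap ℂ[X] (RatFunc ℂ)) q₁ := by rw [← map_mul, hfact]
        have hQ : (algebraMap ℂ[X] (RatFunc ℂ)) q ≠ 0 := RatFunc.algebraMap_ne_zero hq
        rw [hwm, ← div_eq_mul_inv, ← div_eq_mul_inv, ← div_eq_mul_inv,
          div_add_div _ _ hQ1 hQm, div_eq_div_iff hQ (mul_ne_zero hQ1 hQm), h2]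
        simp only [map_mul]
        linear_combination (-(algebraMap ℂ[X] (RatFunc ℂ) p) *
          (algebraMap ℂ[X] (RatFunc ℂ)) ((Polynomial.X - Polynomial.C α) ^ m) *
          (algebraMap ℂ[X] (RatFunc ℂ)) q₁) * huv'
      rw [hsplit]
      exact add_mem (ih q₁ hq₁ hcard₁ (p * u)) (poly_mul_w_pow_mem D hD α m (p * v))
lemma cross_mult {f : RatFunc ℂ} {A B : ℂ[X]} (hB : B ≠ 0)
    (h : f = algebraMap ℂ[X] (RatFunc ℂ) A / algebraMap ℂ[X] (RatFunc ℂ) B) :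
    f.num * B = f.denom * A := by
  have h1 := (RatFunc.num_div_denom f).trans h
  rw [div_eq_div_iff (RatFunc.algebraMap_ne_zero (RatFunc.denom_ne_zero f))
    (RatFunc.algebraMap_ne_zero hB)] at h1
  exact RatFunc.algebraMap_injective ℂ (by rw [map_mul, map_mul]; exact h1.trans (mul_comm _ _))

/-- If `h` is a nonzero element of the span of the simple fractions, then at some point
its numerator has multiplicity 0 and denominator multiplicity 1. -/
lemma span_side (h : RatFunc ℂ)
    (hmem : h ∈ Submodule.span ℂ {f : RatFunc ℂ | ∃ α : ℂ, f = (RatFunc.X - RatFunc.C α)⁻¹})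
    (hne : h ≠ 0) :
    ∃ α₀ : ℂ, h.num.rootMultiplicity α₀ = 0 ∧ h.denom.rootMultiplicity α₀ = 1 := by
  have hset : {f : RatFunc ℂ | ∃ α : ℂ, f = (RatFunc.X - RatFunc.C α)⁻¹}
      = Set.range (fun α : ℂ => (RatFunc.X - RatFunc.C α)⁻¹) := by
    ext f; simp [Set.range, eq_comm]
  rw [hset] at hmem
  obtain ⟨c, hc⟩ := Finsupp.mem_span_range_iff_exists_finsupp.mp hmem
  -- h = P / t
  set s : Finset ℂ := c.support with hs
  set t : ℂ[X] := ∏ α ∈ s, (Polynomial.X - Polynomial.C α) with ht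
  set P : ℂ[X] := ∑ α ∈ s, Polynomial.C (c α) * ∏ β ∈ s.erase α, (Polynomial.X - Polynomial.C β)
    with hP
  have ht0 : t ≠ 0 := by
    rw [ht]
    exact Finset.prod_ne_zero_iff.mpr (fun α _ => X_sub_C_ne_zero α)
  have ht0' : algebraMap ℂ[X] (RatFunc ℂ) t ≠ 0 := RatFunc.algebraMap_ne_zero ht0
  have hhPt : h = algebraMap ℂ[X] (RatFunc ℂ) P / algebraMap ℂ[X] (RatFunc ℂ) t := by
    rw [← hc, Finsupp.sum, hP, map_sum, Finset.sum_div]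
    refine Finset.sum_congr rfl (fun α hα => ?_)
    rw [eq_div_iff ht0', map_mul]
    have htα : t = (Polynomial.X - Polynomial.C α) * ∏ β ∈ s.erase α, (Polynomial.X - Polynomial.C β) :=
      (Finset.mul_prod_erase s (fun β => Polynomial.X - Polynomial.C β) hα).symm
    rw [htα, map_mul, RatFunc.smul_eq_C_mul, RatFunc.algebraMap_C, ← Xsub_eq]
    field_simp [Xsub_ne α]
  -- pick α₀
  have hs0 : s.Nonempty := by
    rcases Finset.eq_empty_or_nonempty s with h0 | h0
    · exfalso; apply hne; rw [← hc, Finsupp.sum, ← hs, h0]; simp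
    · exact h0
  obtain ⟨α₀, hα₀⟩ := hs0
  have hevalP : P.eval α₀ ≠ 0 := by
    rw [hP, Polynomial.eval_finset_sum]
    rw [Finset.sum_eq_single α₀]
    · simp only [Polynomial.eval_mul, Polynomial.eval_C, Polynomial.eval_prod,
        Polynomial.eval_sub, Polynomial.eval_X]
      refine mul_ne_zero (Finsupp.mem_support_iff.mp hα₀) ?_
      exact Finset.prod_ne_zero_iff.mpr (fun β hβ => sub_ne_zero.mpr
        (fun hEq => (Finset.mem_erase.mp hβ).1 hEq.symm))
    · intro α hα hαne
      simp only [Polynomial.eval_mul, Polynomial.eval_prod, Polynomial.eval_sub,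
        Polynomial.eval_X, Polynomial.eval_C]
      refine mul_eq_zero_of_right _ (Finset.prod_eq_zero (Finset.mem_erase.mpr ⟨Ne.symm hαne, hα₀⟩) (sub_self α₀))
    · intro hh; exact absurd hα₀ hh
  have hP0 : P ≠ 0 := fun h0 => hevalP (by rw [h0]; simp)
  have hcm := cross_mult ht0 hhPt
  have hnum0 : h.num ≠ 0 := RatFunc.num_ne_zero hne
  -- root multiplicities at α₀
  have hrt : t.rootMultiplicity α₀ = 1 := by
    have htα : t = (Polynomial.X - Polynomial.C α₀) * ∏ β ∈ s.erase α₀, (Polynomial.X - Polynomial.C β) :=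
      (Finset.mul_prod_erase s (fun β => Polynomial.X - Polynomial.C β) hα₀).symm
    have hprod0 : (∏ β ∈ s.erase α₀, (Polynomial.X - Polynomial.C β)).eval α₀ ≠ 0 := by
      rw [Polynomial.eval_prod]
      simp only [Polynomial.eval_sub, Polynomial.eval_X, Polynomial.eval_C]
      exact Finset.prod_ne_zero_iff.mpr (fun β hβ => sub_ne_zero.mpr
        (fun hEq => (Finset.mem_erase.mp hβ).1 hEq.symm))
    rw [htα, Polynomial.rootMultiplicity_mul (by rw [← htα]; exact ht0),
      Polynomial.rootMultiplicity_X_sub_C_self,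
      Polynomial.rootMultiplicity_eq_zero (by simpa [Polynomial.IsRoot] using hprod0)]
  have hrP : P.rootMultiplicity α₀ = 0 :=
    Polynomial.rootMultiplicity_eq_zero (by simpa [Polynomial.IsRoot] using hevalP)
  have heq : h.num.rootMultiplicity α₀ + t.rootMultiplicity α₀
      = h.denom.rootMultiplicity α₀ + P.rootMultiplicity α₀ := by
    rw [← Polynomial.rootMultiplicity_mul (mul_ne_zero hnum0 ht0),
      ← Polynomial.rootMultiplicity_mul (mul_ne_zero (RatFunc.denom_ne_zero h) hP0), hcm]
  rw [hrt, hrP] at heq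
  -- coprimality forces num multiplicity zero
  have hcop := RatFunc.isCoprime_num_denom h
  have hnz : h.num.rootMultiplicity α₀ = 0 := by
    by_contra hpos
    have h1 : (Polynomial.X - Polynomial.C α₀) ∣ h.num := by
      have := Polynomial.pow_rootMultiplicity_dvd h.num α₀
      exact dvd_trans (dvd_pow_self _ hpos) this
    have h2 : (Polynomial.X - Polynomial.C α₀) ∣ h.denom := by
      have := Polynomial.pow_rootMultiplicity_dvd h.denom α₀
      refine dvd_trans (dvd_pow_self _ ?_) this
      omega
    exact Polynomial.not_isUnit_X_sub_C α₀ (hcop.isUnit_of_dvd' h1 h2)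
  exact ⟨α₀, hnz, by omega⟩

lemma range_side (hD : D RatFunc.X = 1) (g : RatFunc ℂ) (hne : D g ≠ 0) (α₀ : ℂ) :
    ¬((D g).num.rootMultiplicity α₀ = 0 ∧ (D g).denom.rootMultiplicity α₀ = 1) := by
  rintro ⟨h1, h2⟩
  have hg0 : g ≠ 0 := fun h0 => hne (by rw [h0]; exact D.map_zero)
  set p : ℂ[X] := g.num with hp
  set q : ℂ[X] := g.denom with hq
  set N : ℂ[X] := q * derivative p - p * derivative q with hN
  have hq0 : q ≠ 0 := RatFunc.denom_ne_zero g
  have hp0 : p ≠ 0 := RatFunc.num_ne_zero hg0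
  have hgform : D g = algebraMap ℂ[X] (RatFunc ℂ) N / algebraMap ℂ[X] (RatFunc ℂ) (q^2) := by
    conv_lhs => rw [← RatFunc.num_div_denom g]
    rw [Derivation.leibniz_div, D_algebraMap D hD, D_algebraMap D hD, smul_eq_mul,
      smul_eq_mul, smul_eq_mul, hN, map_sub, map_mul, map_mul, map_pow, div_eq_mul_inv,
      ← inv_pow]
    ring
  have hN0 : N ≠ 0 := by
    intro h0
    apply hne
    rw [hgform, h0, map_zero, zero_div]
  have hcm := cross_mult (pow_ne_zero 2 hq0) hgform
  set m := q.rootMultiplicity α₀ with hm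
  have heq : (D g).num.rootMultiplicity α₀ + 2 * m
      = (D g).denom.rootMultiplicity α₀ + N.rootMultiplicity α₀ := by
    have e1 := Polynomial.rootMultiplicity_mul (x := α₀)
      (mul_ne_zero (RatFunc.num_ne_zero hne) (pow_ne_zero 2 hq0))
    have e2 := Polynomial.rootMultiplicity_mul (x := α₀)
      (mul_ne_zero (RatFunc.denom_ne_zero (D g)) hN0)
    rw [hcm] at e1
    rw [e1] at e2
    have e3 : (q^2).rootMultiplicity α₀ = 2 * m := by
      rw [pow_two, Polynomial.rootMultiplicity_mul (mul_ne_zero hq0 hq0)]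
      omega
    omega
  rw [h1, h2] at heq
  have hm1 : 1 ≤ m := by omega
  have hroot : q.IsRoot α₀ := by
    by_contra hr
    have := Polynomial.rootMultiplicity_eq_zero hr
    omega
  have hrmp : p.rootMultiplicity α₀ = 0 := by
    apply Polynomial.rootMultiplicity_eq_zero
    intro hrp
    exact Polynomial.not_isUnit_X_sub_C α₀
      ((RatFunc.isCoprime_num_denom g).isUnit_of_dvd'
        (Polynomial.dvd_iff_isRoot.mpr hrp) (Polynomial.dvd_iff_isRoot.mpr hroot))
  have hq' : derivative q ≠ 0 := by
    intro h0
    have hdeg := Polynomial.natDegree_eq_zero_of_derivative_eq_zero h0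
    have hqc : q = Polynomial.C (q.coeff 0) := Polynomial.eq_C_of_natDegree_eq_zero hdeg
    rw [hqc] at hroot
    simp [Polynomial.IsRoot] at hroot
    exact hq0 (by rw [hqc, hroot, map_zero])
  have hrmq' : (derivative q).rootMultiplicity α₀ = m - 1 :=
    Polynomial.derivative_rootMultiplicity_of_root hroot
  have hpq' : p * derivative q ≠ 0 := mul_ne_zero hp0 hq'
  have hrmpq' : (p * derivative q).rootMultiplicity α₀ = m - 1 := by
    rw [Polynomial.rootMultiplicity_mul hpq', hrmp, hrmq']
    omega
  have d1 : (Polynomial.X - Polynomial.C α₀)^(m-1) ∣ q * derivative p :=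
    dvd_mul_of_dvd_left
      (dvd_trans (pow_dvd_pow _ (Nat.sub_le m 1)) (q.pow_rootMultiplicity_dvd α₀)) _
  have d2 : (Polynomial.X - Polynomial.C α₀)^(m-1) ∣ p * derivative q := by
    rw [← hrmpq']
    exact (p * derivative q).pow_rootMultiplicity_dvd α₀
  have hge : m - 1 ≤ N.rootMultiplicity α₀ :=
    (Polynomial.le_rootMultiplicity_iff hN0).mpr (dvd_sub d1 d2)
  have hnd : ¬ (Polynomial.X - Polynomial.C α₀)^m ∣ N := by
    intro hdvd
    have dq : (Polynomial.X - Polynomial.C α₀)^m ∣ q * derivative p :=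
      dvd_mul_of_dvd_left (q.pow_rootMultiplicity_dvd α₀) _
    have dpq : (Polynomial.X - Polynomial.C α₀)^m ∣ p * derivative q := by
      have hrepr : p * derivative q = q * derivative p - N := by rw [hN]; ring
      rw [hrepr]
      exact dvd_sub dq hdvd
    have := (Polynomial.le_rootMultiplicity_iff hpq').mpr dpq
    omega
  have hle : N.rootMultiplicity α₀ ≤ m - 1 := by
    have hx := (Polynomial.rootMultiplicity_le_iff hN0 α₀ (m-1)).mpr
    rw [Nat.sub_add_cancel hm1] at hx
    exact hx hnd
  omega

end RFD

/-- for A = ℂ(x) with the ordinary derivative D₀ = d/dx (the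
unique ℂ-derivation with D₀(x) = 1), one has ℂ(x) = im(D₀) ⊕ ℂ(x)_T as
ℂ-vector spaces, where ℂ(x)_T consists of the sums Σ γ_i/(x−α_i) with the α_i
distinct, i.e. ℂ(x)_T is the ℂ-span of the simple fractions 1/(x−α), α ∈ ℂ. -/
theorem ratfunc_decomposition_weight_zero
    (D : Derivation ℂ (RatFunc ℂ) (RatFunc ℂ)) (hD : D RatFunc.X = 1) :
    IsCompl (LinearMap.range D.toLinearMap)
      (Submodule.span ℂ
        {f : RatFunc ℂ | ∃ α : ℂ, f = (RatFunc.X - RatFunc.C α)⁻¹}) := by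
  constructor
  · rw [Submodule.disjoint_def]
    intro f hf hspan
    by_contra hne
    obtain ⟨g, hg⟩ := hf
    obtain ⟨α₀, h1, h2⟩ := RFD.span_side f hspan hne
    refine RFD.range_side D hD g ?_ α₀ ⟨by rw [show D g = f from hg]; exact h1,
      by rw [show D g = f from hg]; exact h2⟩
    rw [show D g = f from hg]; exact hne
  · rw [codisjoint_iff, eq_top_iff]
    intro f _
    show f ∈ RFD.U D
    rw [← RatFunc.num_div_denom f, div_eq_mul_inv]
    exact RFD.div_mem D hD f.denom.roots.toFinset.card f.denom
      (RatFunc.denom_ne_zero f) le_rfl f.num
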